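/- arXiv:2009.02802 — 2 statements merged into one kernel-verified Lean document; each statement's English description precedes it below -/
import Mathlib

section
/- Fix y > 0 and k ∈ ℕ. The function f : ℝ → ℂ defined by f(t) = k! / (y + i t)^{k+1} is positive definite; that is, for all n, all complex numbers c₁,…,cₙ, and all real points t₁,…,tₙ, the sum ∑_{j,l} f(t_j − t_l) c_j conj(c_l) has nonnegative real part and is a nonnegative real number. -/
open Complex MeasureTheory Set Filter Topology

lemma aux_int_real (k : ℕ) {c : ℝ} (hc : 0 < c) :
    IntegrableOn (fun x : ℝ => x ^ k * Real.exp (-(c * x))) (Ioi 0) := by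
  have h0 := Real.GammaIntegral_convergent (s := (k : ℝ) + 1) (by positivity)
  have h1 : IntegrableOn (fun x : ℝ =>
      Real.exp (-(c * x)) * (c * x) ^ ((k : ℝ) + 1 - 1)) (Ioi 0) := by
    have := (integrableOn_Ioi_comp_mul_left_iff
      (fun x : ℝ => Real.exp (-x) * x ^ ((k : ℝ) + 1 - 1)) 0 hc).mpr (by simpa using h0)
    simpa using this
  have h2 : IntegrableOn (fun x : ℝ =>
      c⁻¹ ^ k * (Real.exp (-(c * x)) * (c * x) ^ ((k : ℝ) + 1 - 1))) (Ioi 0) :=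
    h1.const_mul (c⁻¹ ^ k)
  refine h2.congr_fun (fun x hx => ?_) measurableSet_Ioi
  have hx0 : (0:ℝ) < x := hx
  rw [add_sub_cancel_right]
  beta_reduce
  rw [Real.rpow_natCast, mul_pow]
  field_simp
  rw [← mul_pow]
  simp [hc.ne']

lemma aux_int (k : ℕ) {a : ℂ} (ha : 0 < a.re) :
    IntegrableOn (fun x : ℝ => (x:ℂ) ^ k * Complex.exp (-(a * x))) (Ioi 0) := by
  refine Integrable.mono' (aux_int_real k ha) ?_ ?_
  · exact (Continuous.aestronglyMeasurable (by fun_prop)).restrict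
  · filter_upwards [ae_restrict_mem measurableSet_Ioi] with x hx
    have hx0 : (0:ℝ) < x := hx
    rw [norm_mul, norm_pow, Complex.norm_exp,
      Complex.norm_real, Real.norm_eq_abs, abs_of_pos hx0]
    simp [Complex.mul_re]

lemma aux_tendsto (m : ℕ) {c : ℝ} (hc : 0 < c) :
    Tendsto (fun x : ℝ => x ^ m * Real.exp (-(c * x))) atTop (𝓝 0) := by
  have h := (Real.tendsto_pow_mul_exp_neg_atTop_nhds_zero m).comp
    (tendsto_id.const_mul_atTop hc)
  have h2 := h.const_mul (c⁻¹ ^ m)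
  rw [mul_zero] at h2
  refine h2.congr fun x => ?_
  simp only [Function.comp, id]
  rw [mul_pow, ← mul_assoc, ← mul_assoc, ← mul_pow, inv_mul_cancel₀ hc.ne', one_pow, one_mul]


lemma aux_deriv {a : ℂ} (x : ℝ) :
    HasDerivAt (fun x : ℝ => Complex.exp (-(a * x))) (-a * Complex.exp (-(a * x))) x := by
  have h := ((((hasDerivAt_id ((x : ℝ) : ℂ)).const_mul a).neg).cexp).comp_ofReal
  simpa [mul_comm] using h

lemma aux_tendsto_C {a : ℂ} (ha : 0 < a.re) (m : ℕ) :
    Tendsto (fun x : ℝ => -(x:ℂ) ^ m * Complex.exp (-(a * x)) / a) atTop (𝓝 0) := by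
  have hb : Tendsto (fun x : ℝ => x ^ m * Real.exp (-(a.re * x)) * ‖a‖⁻¹) atTop (𝓝 0) := by
    simpa using (aux_tendsto m ha).mul_const ‖a‖⁻¹
  refine squeeze_zero_norm' ?_ hb
  filter_upwards [eventually_ge_atTop (0:ℝ)] with x hx
  rw [norm_div, norm_mul, norm_neg, norm_pow,
    Complex.norm_exp, Complex.norm_real, Real.norm_eq_abs, _root_.abs_of_nonneg hx]
  simp [Complex.mul_re, div_eq_mul_inv]

lemma laplace {a : ℂ} (ha : 0 < a.re) :
    ∀ k : ℕ, (∫ x : ℝ in Ioi 0, (x:ℂ) ^ k * Complex.exp (-(a * x)))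
      = (k.factorial : ℂ) / a ^ (k + 1) := by
  have ha0 : a ≠ 0 := fun h => by simp [h] at ha
  intro k
  induction k with
  | zero =>
    have hder : ∀ x ∈ Ici (0:ℝ), HasDerivAt (fun x : ℝ => -Complex.exp (-(a * x)) / a)
        ((x:ℂ) ^ 0 * Complex.exp (-(a * x))) x := by
      intro x _
      have := ((aux_deriv (a := a) x).neg).div_const a
      convert this using 1
      · rfl
      · rfl
      · field_simp
    have htend : Tendsto (fun x : ℝ => -Complex.exp (-(a * x)) / a) atTop (𝓝 0) := by
      have := aux_tendsto_C ha 0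
      simpa using this
    have h := integral_Ioi_of_hasDerivAt_of_tendsto' hder (aux_int 0 ha) htend
    rw [h]
    simp
    field_simp
  | succ k ih =>
    set F : ℝ → ℂ := fun x => -(x:ℂ) ^ (k+1) * Complex.exp (-(a * x)) / a with hF
    have hder : ∀ x ∈ Ici (0:ℝ), HasDerivAt F
        ((x:ℂ) ^ (k+1) * Complex.exp (-(a * x))
          - ((k+1 : ℕ) : ℂ) / a * ((x:ℂ) ^ k * Complex.exp (-(a * x)))) x := by
      intro x _
      have h1 : HasDerivAt (fun x : ℝ => (x:ℂ) ^ (k+1))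
          (((k+1 : ℕ) : ℂ) * (x:ℂ) ^ k) x := by
        have := (hasDerivAt_pow (k+1) ((x:ℝ):ℂ)).comp_ofReal
        simpa using this
      have h2 := aux_deriv (a := a) x
      have h3 := ((h1.mul h2).neg).div_const a
      convert h3 using 1
      · rfl
      · funext z
        simp only [hF, Pi.mul_apply, Pi.neg_apply]
        ring
      · field_simp
        ring
    have htend : Tendsto F atTop (𝓝 0) := aux_tendsto_C ha (k+1)
    have hint : IntegrableOn (fun x : ℝ => (x:ℂ) ^ (k+1) * Complex.exp (-(a * x))
        - ((k+1 : ℕ) : ℂ) / a * ((x:ℂ) ^ k * Complex.exp (-(a * x)))) (Ioi 0) :=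
      (aux_int (k+1) ha).sub ((aux_int k ha).const_mul _)
    have key := integral_Ioi_of_hasDerivAt_of_tendsto' hder hint htend
    rw [integral_sub (aux_int (k+1) ha) ((aux_int k ha).const_mul _),
      integral_const_mul, ih] at key
    have hF0 : F 0 = 0 := by simp [hF]
    rw [hF0, sub_zero, sub_eq_zero] at key
    rw [key, Nat.factorial_succ, div_mul_div_comm, ← pow_succ']
    push_cast
    ring

theorem stmt_2 (y : ℝ) (hy : 0 < y) (k : ℕ)
    (f : ℝ → ℂ) (hf : ∀ t : ℝ, f t = (k.factorial : ℂ) / ((y:ℂ) + Complex.I * t)^(k+1)) :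
    ∀ (n : ℕ) (t : Fin n → ℝ) (c : Fin n → ℂ),
      0 ≤ (∑ j, ∑ l, f (t j - t l) * c j * (starRingEnd ℂ) (c l)).re ∧
      (∑ j, ∑ l, f (t j - t l) * c j * (starRingEnd ℂ) (c l)).im = 0 := by
  intro n t c
  set aa : Fin n → Fin n → ℂ := fun j l => (y:ℂ) + Complex.I * ((t j - t l : ℝ) : ℂ) with haa
  have hre : ∀ j l, 0 < (aa j l).re := by
    intro j l
    simp only [haa, Complex.add_re, Complex.ofReal_re, Complex.mul_re, Complex.I_re,
      Complex.I_im, Complex.ofReal_im]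
    simpa using hy
  set S : ℝ → ℂ := fun x => ∑ j, c j * Complex.exp (-(Complex.I * t j * x)) with hS
  set G : Fin n → Fin n → ℝ → ℂ := fun j l x =>
    ((x:ℂ) ^ k * Complex.exp (-(aa j l * x))) * (c j * (starRingEnd ℂ) (c l)) with hG
  have hintG : ∀ j l, IntegrableOn (G j l) (Ioi 0) := fun j l =>
    (aux_int k (hre j l)).mul_const _
  have h1 : ∀ j l, f (t j - t l) * c j * (starRingEnd ℂ) (c l)
      = ∫ x : ℝ in Ioi 0, G j l x := by
    intro j l
    simp only [hG]
    rw [MeasureTheory.integral_mul_const, laplace (hre j l) k, hf, mul_assoc]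
  have hpt : ∀ x : ℝ, ∑ j, ∑ l, G j l x
      = ((x ^ k * Real.exp (-(y * x)) * Complex.normSq (S x) : ℝ) : ℂ) := by
    intro x
    have hSconj : (S x) * (starRingEnd ℂ) (S x)
        = ∑ j, ∑ l, (c j * Complex.exp (-(Complex.I * t j * x)))
            * ((starRingEnd ℂ) (c l) * Complex.exp (Complex.I * t l * x)) := by
      rw [hS, map_sum, Finset.sum_mul_sum]
      refine Finset.sum_congr rfl fun j _ => Finset.sum_congr rfl fun l _ => ?_
      rw [map_mul, ← Complex.exp_conj]
      congr 2
      simp [Complex.conj_ofReal]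
    have : ((x ^ k * Real.exp (-(y * x)) * Complex.normSq (S x) : ℝ) : ℂ)
        = ((x:ℂ) ^ k * Complex.exp (-((y:ℂ) * x))) * ((S x) * (starRingEnd ℂ) (S x)) := by
      rw [Complex.mul_conj]
      push_cast
      ring
    rw [this, hSconj, Finset.mul_sum]
    refine Finset.sum_congr rfl fun j _ => ?_
    rw [Finset.mul_sum]
    refine Finset.sum_congr rfl fun l _ => ?_
    simp only [hG, haa]
    rw [show -(((y:ℂ) + Complex.I * ((t j - t l : ℝ) : ℂ)) * x)
        = -((y:ℂ) * x) + (-(Complex.I * t j * x) + Complex.I * t l * x) by push_cast; ring,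
      Complex.exp_add, Complex.exp_add]
    ring
  have hmain : (∑ j, ∑ l, f (t j - t l) * c j * (starRingEnd ℂ) (c l))
      = Complex.ofReal (∫ x in Ioi 0, ((x ^ k * Real.exp (-(y * x)) * Complex.normSq (S x) : ℝ))) := by
    calc (∑ j, ∑ l, f (t j - t l) * c j * (starRingEnd ℂ) (c l))
        = ∑ j, ∑ l, ∫ x : ℝ in Ioi 0, G j l x :=
          Finset.sum_congr rfl fun j _ => Finset.sum_congr rfl fun l _ => h1 j l
      _ = ∑ j, ∫ x : ℝ in Ioi 0, ∑ l, G j l x :=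
          Finset.sum_congr rfl fun j _ =>
            (integral_finset_sum _ fun l _ => hintG j l).symm
      _ = ∫ x : ℝ in Ioi 0, ∑ j, ∑ l, G j l x :=
          (integral_finset_sum _ fun j _ =>
            integrable_finset_sum _ fun l _ => hintG j l).symm
      _ = ∫ x : ℝ in Ioi 0, ((x ^ k * Real.exp (-(y * x)) * Complex.normSq (S x) : ℝ) : ℂ) := by
          refine integral_congr_ae (Eventually.of_forall fun x => ?_)
          exact hpt x
      _ = _ := integral_ofReal
  rw [hmain]
  constructor
  · rw [Complex.ofReal_re]
    refine setIntegral_nonneg measurableSet_Ioi fun x hx => ?_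
    have hx0 : (0:ℝ) ≤ x := le_of_lt hx
    exact mul_nonneg (mul_nonneg (pow_nonneg hx0 k) (Real.exp_nonneg _))
      (Complex.normSq_nonneg _)
  · rw [Complex.ofReal_im]
end

section
/- Fix y ≠ 0 real, t ∈ ℝ, m ∈ ℕ, and z = t + iy. For complex h with z + h ∉ ℝ and h ≠ 0, define E_m(h, t) = (1/h)[1/(z+h−t')^{m+1} − 1/(z−t')^{m+1}] as a function of t' ∈ ℝ. Then for each fixed t' with z − t' ≠ 0, E_m(h, t') → −(m+1)/(z−t')^{m+2} as h → 0, and moreover this convergence is uniform over t' ∈ ℝ together with the bound: sup_{t'∈ℝ} (1+|t'|)^m |E_m(h,t') + (m+1)/(z−t')^{m+2}| → 0 as h → 0. -/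
open Complex Filter

private lemma aux_hid (m : ℕ) (a b h : ℂ) (ha : a ≠ 0) (hb : b ≠ 0) (hh : h ≠ 0) (hab : a = b + h) :
    (1/h) * (1/a^(m+1) - 1/b^(m+1)) + ((m:ℂ)+1)/b^(m+2)
      = ∑ i ∈ Finset.range (m+1), h * (a^i * ∑ l ∈ Finset.range (m+1-i), a^l * b^(m-i-l)) / (a^(m+1) * b^(m+2)) := by
  have hba : a - b = h := by rw [hab]; ring
  have e1 : ∀ i ∈ Finset.range (m+1),
      h * (a^i * ∑ l ∈ Finset.range (m+1-i), a^l * b^(m-i-l)) / (a^(m+1) * b^(m+2))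
        = (a^(m+1) - a^i * b^(m+1-i)) / (a^(m+1) * b^(m+2)) := by
    intro i hi
    have hi' := Finset.mem_range.mp hi
    have hs : (∑ l ∈ Finset.range (m+1-i), a^l * b^(m-i-l))
        = ∑ l ∈ Finset.range (m+1-i), a^l * b^((m+1-i)-1-l) :=
      Finset.sum_congr rfl (fun l hl => by
        have : m-i-l = (m+1-i)-1-l := by omega
        rw [this])
    have h1 : a^(m+1-i) - b^(m+1-i) = (∑ l ∈ Finset.range (m+1-i), a^l * b^(m-i-l)) * h := by
      rw [hs, ← hba, geom_sum₂_mul]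
    have h2 : a^i * a^(m+1-i) = a^(m+1) := by rw [← pow_add]; congr 1; omega
    have h3 : h * (a^i * ∑ l ∈ Finset.range (m+1-i), a^l * b^(m-i-l))
        = a^(m+1) - a^i * b^(m+1-i) := by linear_combination h2 - a^i * h1
    rw [h3]
  rw [Finset.sum_congr rfl e1]
  have hP : ∑ i ∈ Finset.range (m+1), a^i * b^(m+1-i)
      = b * ∑ i ∈ Finset.range (m+1), a^i * b^(m-i) := by
    rw [Finset.mul_sum]
    refine Finset.sum_congr rfl (fun i hi => ?_)
    have hi' := Finset.mem_range.mp hi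
    have : m+1-i = (m-i)+1 := by omega
    rw [this, pow_succ]; ring
  have hS1 : a^(m+1) - b^(m+1) = (∑ l ∈ Finset.range (m+1), a^l * b^(m-l)) * h := by
    rw [← hba, ← geom_sum₂_mul a b (m+1)]
    simp
  rw [← Finset.sum_div, Finset.sum_sub_distrib, Finset.sum_const, Finset.card_range, hP]
  set Q := ∑ l ∈ Finset.range (m+1), a^l * b^(m-l) with hQ
  rw [nsmul_eq_mul]
  push_cast
  have key : (1/h) * (1/a^(m+1) - 1/b^(m+1)) = -Q / (a^(m+1)*b^(m+1)) := by
    rw [div_sub_div _ _ (pow_ne_zero _ ha) (pow_ne_zero _ hb), one_mul, mul_one]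
    rw [show b^(m+1) - a^(m+1) = -(Q*h) by linear_combination -hS1]
    rw [div_mul_eq_mul_div, one_mul, neg_div, neg_div, div_div]
    rw [mul_div_mul_right _ _ hh, neg_div]
  rw [key]
  rw [div_add_div _ _ (by exact mul_ne_zero (pow_ne_zero _ ha) (pow_ne_zero _ hb)) (pow_ne_zero _ hb),
    div_eq_div_iff (by exact mul_ne_zero (mul_ne_zero (pow_ne_zero _ ha) (pow_ne_zero _ hb)) (pow_ne_zero _ hb))
      (mul_ne_zero (pow_ne_zero _ ha) (pow_ne_zero _ hb))]
  ring

private lemma aux_sum_bound (a b : ℂ) (n : ℕ) (hab : ‖a‖ ≤ 2 * ‖b‖) :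
    ‖∑ l ∈ Finset.range n, a ^ l * b ^ (n - 1 - l)‖ ≤ n * (2 * ‖b‖) ^ (n - 1) := by
  calc ‖∑ l ∈ Finset.range n, a ^ l * b ^ (n - 1 - l)‖
      ≤ ∑ l ∈ Finset.range n, ‖a ^ l * b ^ (n - 1 - l)‖ := norm_sum_le _ _
    _ ≤ ∑ l ∈ Finset.range n, (2 * ‖b‖) ^ (n - 1) := by
        apply Finset.sum_le_sum
        intro l hl
        have hl' := Finset.mem_range.mp hl
        rw [norm_mul, norm_pow, norm_pow]
        have hb2 : ‖b‖ ≤ 2 * ‖b‖ := by linarith [norm_nonneg b]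
        calc ‖a‖ ^ l * ‖b‖ ^ (n - 1 - l) ≤ (2*‖b‖)^l * (2*‖b‖)^(n-1-l) := by
              apply mul_le_mul (pow_le_pow_left₀ (norm_nonneg a) hab l)
                (pow_le_pow_left₀ (norm_nonneg b) hb2 _) (by positivity) (by positivity)
          _ = (2*‖b‖)^(n-1) := by
              rw [← pow_add]
              congr 1
              omega
    _ = n * (2*‖b‖)^(n-1) := by simp [Finset.sum_const, Finset.card_range]


private lemma aux_key_bound (m : ℕ) (b h : ℂ) (hb : b ≠ 0) (hh : h ≠ 0) (hs : ‖h‖ ≤ ‖b‖ / 2) :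
    ‖(1/h) * (1/(b+h)^(m+1) - 1/b^(m+1)) + ((m:ℂ)+1)/b^(m+2)‖
      ≤ 2 * ((m:ℝ)+1)^2 * 4^m * ‖h‖ / ‖b‖^(m+3) := by
  set a := b + h with hab
  set r := ‖b‖ with hr'
  have hr : 0 < r := norm_pos_iff.mpr hb
  have h1 : r/2 ≤ ‖a‖ := by
    have hba : ‖b‖ ≤ ‖a‖ + ‖h‖ := by
      calc ‖b‖ = ‖a - h‖ := by rw [hab]; ring_nf
        _ ≤ ‖a‖ + ‖h‖ := norm_sub_le _ _
    linarith
  have ha : a ≠ 0 := by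
    intro h0
    rw [h0, norm_zero] at h1
    linarith
  have h2 : ‖a‖ ≤ 2 * r := le_trans (norm_add_le b h) (by linarith)
  rw [aux_hid m a b h ha hb hh hab]
  have hterm : ∀ i ∈ Finset.range (m+1),
      ‖h * (a^i * ∑ l ∈ Finset.range (m+1-i), a^l * b^(m-i-l)) / (a^(m+1) * b^(m+2))‖
        ≤ 2 * ((m:ℝ)+1) * 4^m * ‖h‖ / r^(m+3) := by
    intro i hi
    have hi' := Finset.mem_range.mp hi
    have hSb : ‖∑ l ∈ Finset.range (m+1-i), a^l * b^(m-i-l)‖ ≤ ((m:ℝ)+1) * (2*r)^(m-i) := by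
      have := aux_sum_bound a b (m+1-i) h2
      have he : ∑ l ∈ Finset.range (m+1-i), a^l * b^((m+1-i)-1-l)
          = ∑ l ∈ Finset.range (m+1-i), a^l * b^(m-i-l) :=
        Finset.sum_congr rfl (fun l hl => by
          have : (m+1-i)-1-l = m-i-l := by omega
          rw [this])
      rw [he] at this
      refine this.trans ?_
      have e2 : (m+1-i) - 1 = m - i := by omega
      rw [e2]
      have : ((m+1-i : ℕ) : ℝ) ≤ (m:ℝ)+1 := by
        push_cast
        have : ((m+1-i : ℕ) : ℝ) ≤ ((m+1 : ℕ) : ℝ) := Nat.cast_le.mpr (by omega)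
        push_cast at this
        linarith
      exact mul_le_mul_of_nonneg_right this (by positivity)
    rw [norm_div, norm_mul, norm_mul, norm_mul, norm_pow, norm_pow, norm_pow]
    calc ‖h‖ * (‖a‖^i * ‖∑ l ∈ Finset.range (m+1-i), a^l * b^(m-i-l)‖) / (‖a‖^(m+1) * r^(m+2))
        ≤ ‖h‖ * ((2*r)^i * (((m:ℝ)+1) * (2*r)^(m-i))) / ((r/2)^(m+1) * r^(m+2)) := by
          gcongr
      _ = 2 * ((m:ℝ)+1) * 4^m * ‖h‖ / r^(m+3) := by
          rw [show ‖h‖ * ((2*r)^i * (((m:ℝ)+1)*(2*r)^(m-i))) = ‖h‖*((m:ℝ)+1)*(2*r)^(i+(m-i)) from by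
            rw [pow_add]; ring, show i + (m-i) = m from by omega]
          rw [show (4:ℝ)^m = 2^m * 2^m from by rw [← mul_pow]; norm_num]
          rw [mul_pow, div_pow]
          field_simp
          ring
  calc ‖∑ i ∈ Finset.range (m+1), h * (a^i * ∑ l ∈ Finset.range (m+1-i), a^l * b^(m-i-l)) / (a^(m+1) * b^(m+2))‖
      ≤ ∑ i ∈ Finset.range (m+1), ‖h * (a^i * ∑ l ∈ Finset.range (m+1-i), a^l * b^(m-i-l)) / (a^(m+1) * b^(m+2))‖ :=
        norm_sum_le _ _
    _ ≤ ∑ _i ∈ Finset.range (m+1), 2 * ((m:ℝ)+1) * 4^m * ‖h‖ / r^(m+3) := Finset.sum_le_sum hterm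
    _ = 2 * ((m:ℝ)+1)^2 * 4^m * ‖h‖ / r^(m+3) := by
        rw [Finset.sum_const, Finset.card_range, nsmul_eq_mul]
        push_cast
        ring

theorem stmt_12 (y t : ℝ) (hy : y ≠ 0) (m : ℕ) (z : ℂ) (hz : z = t + Complex.I * y)
    (E : ℂ → ℝ → ℂ)
    (hE : ∀ (h : ℂ) (t' : ℝ), E h t' =
      (1/h) * (1/(z + h - t')^(m+1) - 1/(z - t')^(m+1))) :
    (∀ t' : ℝ,
      Filter.Tendsto (fun h : ℂ => E h t')
        (nhdsWithin 0 {h : ℂ | h ≠ 0 ∧ (z + h).im ≠ 0})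
        (nhds (-(m+1 : ℂ)/(z - t')^(m+2)))) ∧
    (∀ ε : ℝ, 0 < ε → ∃ δ : ℝ, 0 < δ ∧ ∀ h : ℂ, h ≠ 0 → (z + h).im ≠ 0 → ‖h‖ < δ →
      ∀ t' : ℝ, (1 + |t'|)^m * ‖E h t' + (m+1 : ℂ)/(z - t')^(m+2)‖ < ε) := by
  have hy' : (0:ℝ) < |y| := abs_pos.mpr hy
  have hbim : ∀ t' : ℝ, (z - (t' : ℂ)).im = y := by
    intro t'
    simp [hz]
  have hbne : ∀ t' : ℝ, z - (t' : ℂ) ≠ 0 := by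
    intro t' h0
    have := hbim t'
    rw [h0] at this
    simp at this
    exact hy this.symm
  have hyb : ∀ t' : ℝ, |y| ≤ ‖z - (t' : ℂ)‖ := by
    intro t'
    have := Complex.abs_im_le_norm (z - (t' : ℂ))
    rw [hbim t'] at this
    exact this
  have hbre : ∀ t' : ℝ, (z - (t' : ℂ)).re = t - t' := by
    intro t'
    simp [hz]
  have htb : ∀ t' : ℝ, |t - t'| ≤ ‖z - (t' : ℂ)‖ := by
    intro t'
    have := Complex.abs_re_le_norm (z - (t' : ℂ))
    rw [hbre t'] at this
    exact this
  set C : ℝ := (1 + |t|)/|y| + 1 with hC'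
  have hC0 : 0 < C := by positivity
  have hC : ∀ t' : ℝ, 1 + |t'| ≤ C * ‖z - (t' : ℂ)‖ := by
    intro t'
    have h1 := hyb t'
    have h2 := htb t'
    have h3 : |t'| ≤ |t - t'| + |t| := by
      have := abs_sub_abs_le_abs_sub t' t
      have h4 : |t' - t| = |t - t'| := abs_sub_comm t' t
      linarith [this, h4.le]
    have h5 : (1 + |t|)/|y| * |y| ≤ (1 + |t|)/|y| * ‖z - (t' : ℂ)‖ :=
      mul_le_mul_of_nonneg_left h1 (by positivity)
    rw [div_mul_cancel₀ _ (ne_of_gt hy')] at h5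
    have h6 : 0 ≤ |t| := abs_nonneg t
    have h7 : ((1 + |t|)/|y| + 1) * ‖z - (t' : ℂ)‖
        = (1 + |t|)/|y| * ‖z - (t' : ℂ)‖ + ‖z - (t' : ℂ)‖ := by ring
    rw [hC', h7]
    linarith
  set K : ℝ := 2 * ((m:ℝ)+1)^2 * 4^m with hK'
  have hK0 : 0 < K := by positivity
  set B : ℝ := C^m * K / |y|^3 with hB'
  have hB0 : 0 < B := by positivity
  have H2 : ∀ ε : ℝ, 0 < ε → ∃ δ : ℝ, 0 < δ ∧ ∀ h : ℂ, h ≠ 0 → (z + h).im ≠ 0 → ‖h‖ < δ →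
      ∀ t' : ℝ, (1 + |t'|)^m * ‖E h t' + (m+1 : ℂ)/(z - t')^(m+2)‖ < ε := by
    intro ε hε
    refine ⟨min (|y|/2) (ε/(B+1)), lt_min (by positivity) (by positivity), ?_⟩
    intro h hh him hnorm t'
    set b : ℂ := z - (t' : ℂ) with hb'
    have hb : b ≠ 0 := hbne t'
    have hr0 : 0 < ‖b‖ := norm_pos_iff.mpr hb
    have hyr : |y| ≤ ‖b‖ := hyb t'
    have hs : ‖h‖ ≤ ‖b‖/2 := by
      have := lt_of_lt_of_le hnorm (min_le_left _ _)
      linarith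
    have hEe : E h t' = (1/h) * (1/(b + h)^(m+1) - 1/b^(m+1)) := by
      rw [hE]
      congr 3
      rw [hb']
      ring
    have hbd := aux_key_bound m b h hb hh hs
    rw [hEe] at *
    have hw : (1 + |t'|)^m ≤ (C * ‖b‖)^m :=
      pow_le_pow_left₀ (by positivity) (hC t') m
    have step1 : (1 + |t'|)^m * ‖(1/h) * (1/(b + h)^(m+1) - 1/b^(m+1)) + ((m:ℂ)+1)/b^(m+2)‖
        ≤ (C * ‖b‖)^m * (K * ‖h‖ / ‖b‖^(m+3)) := by
      apply mul_le_mul hw _ (norm_nonneg _) (by positivity)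
      calc ‖(1/h) * (1/(b + h)^(m+1) - 1/b^(m+1)) + ((m:ℂ)+1)/b^(m+2)‖
          ≤ 2 * ((m:ℝ)+1)^2 * 4^m * ‖h‖ / ‖b‖^(m+3) := hbd
        _ = K * ‖h‖ / ‖b‖^(m+3) := by rw [hK']
    have step2 : (C * ‖b‖)^m * (K * ‖h‖ / ‖b‖^(m+3)) = C^m * K * ‖h‖ / ‖b‖^3 := by
      have hbm : (‖b‖:ℝ)^m ≠ 0 := pow_ne_zero _ (ne_of_gt hr0)
      rw [mul_pow, pow_add, mul_comm (‖b‖^m) (‖b‖^3), ← div_div, mul_assoc,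
        mul_comm (‖b‖^m) (K * ‖h‖ / ‖b‖^3 / ‖b‖^m), div_mul_cancel₀ _ hbm,
        ← mul_div_assoc, ← mul_assoc]
    have step3 : C^m * K * ‖h‖ / ‖b‖^3 ≤ C^m * K * ‖h‖ / |y|^3 := by
      gcongr
    have step4 : C^m * K * ‖h‖ / |y|^3 = B * ‖h‖ := by
      rw [hB']
      ring
    have hh2 : ‖h‖ < ε/(B+1) := lt_of_lt_of_le hnorm (min_le_right _ _)
    have step5 : B * ‖h‖ < ε := by
      have h5 : B * ‖h‖ ≤ B * (ε/(B+1)) := mul_le_mul_of_nonneg_left hh2.le hB0.le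
      have h6 : B * (ε/(B+1)) < ε := by
        rw [mul_div_assoc']
        rw [div_lt_iff₀ (by linarith : (0:ℝ) < B+1)]
        nlinarith
      linarith
    calc (1 + |t'|)^m * ‖(1/h) * (1/(b + h)^(m+1) - 1/b^(m+1)) + ((m:ℂ)+1)/b^(m+2)‖
        ≤ (C * ‖b‖)^m * (K * ‖h‖ / ‖b‖^(m+3)) := step1
      _ = C^m * K * ‖h‖ / ‖b‖^3 := step2
      _ ≤ C^m * K * ‖h‖ / |y|^3 := step3
      _ = B * ‖h‖ := step4
      _ < ε := step5
  refine ⟨?_, H2⟩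
  intro t'
  rw [Metric.tendsto_nhdsWithin_nhds]
  intro ε hε
  obtain ⟨δ, hδ, hδ'⟩ := H2 ε hε
  refine ⟨δ, hδ, ?_⟩
  intro h hmem hdist
  rw [dist_zero_right] at hdist
  have hval := hδ' h hmem.1 hmem.2 hdist t'
  rw [dist_eq_norm]
  have hrw : E h t' - -(m+1 : ℂ)/(z - t')^(m+2) = E h t' + (m+1 : ℂ)/(z - t')^(m+2) := by
    rw [neg_div, sub_neg_eq_add]
  rw [hrw]
  have h1 : 1 ≤ (1 + |t'|)^m := one_le_pow₀ (by linarith [abs_nonneg t'])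
  nlinarith [norm_nonneg (E h t' + (m+1 : ℂ)/(z - t')^(m+2))]
end
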